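/- Let X be a complete metric space, f: X → ℝ∪{+∞} lower semicontinuous, x̄ ∈ [f≤0], and φ: ℝ₊ → ℝ₊ with φ(0) = 0, φ(t) > 0 for t > 0, φ continuously differentiable on ]0,+∞[ with φ' > 0 there, and lim_{t→+∞} φ(t) = +∞. If |∇(φ∘f₊)|⋄(x) ≥ 1 for all x with f(x) > 0 near x̄ with f(x) near 0 (precisely: there exist δ, μ > 0 such that this holds for all x ∈ B_δ(x̄) with 0 < f(x) < μ), then f admits a local φ-error bound at x̄: there exist δ', μ' > 0 with d(x,[f≤0]) ≤ φ(f(x)) for all x ∈ B_{δ'}(x̄) with 0 < f(x) < μ'. -/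

import Mathlib

open Filter EMetric Set Topology
open scoped ENNReal NNReal

noncomputable def epos (a : EReal) : ℝ≥0∞ := if a = ⊤ then ⊤ else ENNReal.ofReal a.toReal

noncomputable def nslope {X : Type*} [MetricSpace X] (f : X → EReal) (x : X) : ℝ≥0∞ :=
  ⨆ u ∈ {u : X | u ≠ x}, epos (f x - max (f u) 0) / edist u x

noncomputable def lslope {X : Type*} [MetricSpace X] (f : X → EReal) (x : X) : ℝ≥0∞ :=
  Filter.limsup (fun u => epos (f x - f u) / edist u x) (𝓝[≠] x)

/-- Ekeland-type variational principle for `ℝ≥0∞`-valued lsc functions. -/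
theorem my_ekeland {X : Type*} [MetricSpace X] [CompleteSpace X]
    (H : X → ℝ≥0∞) (hH : LowerSemicontinuous H) {σ : ℝ≥0∞} (hσ0 : σ ≠ 0) (hσt : σ ≠ ⊤)
    (x0 : X) (hx0 : H x0 ≠ ⊤) :
    ∃ y, H y + σ * edist x0 y ≤ H x0 ∧ ∀ u, u ≠ y → ¬ (H u + σ * edist u y ≤ H y) := by
  classical
  set P : X → X → Prop := fun x u => H u + σ * edist x u ≤ H x with hP
  have Prefl : ∀ x, P x x := fun x => by simp [hP]
  have Ple : ∀ {x u : X}, P x u → H u ≤ H x := fun {x u} h => le_trans le_self_add h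
  have Ptrans : ∀ {x u v : X}, P x u → P u v → P x v := by
    intro x u v h1 h2
    have h3 : H v + σ * edist x v ≤ (H v + σ * edist u v) + σ * edist x u := by
      calc H v + σ * edist x v ≤ H v + σ * (edist x u + edist u v) := by
            gcongr; exact edist_triangle _ _ _
        _ = (H v + σ * edist u v) + σ * edist x u := by ring
    calc H v + σ * edist x v ≤ (H v + σ * edist u v) + σ * edist x u := h3
      _ ≤ H u + σ * edist x u := by gcongr
      _ ≤ H x := h1
  have hex : ∀ (n : ℕ) (x : X), H x ≠ ⊤ →
      ∃ u, P x u ∧ ∀ v, P x v → H u ≤ H v + 2⁻¹ ^ n := by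
    intro n x hx
    set I := sInf (H '' {u | P x u}) with hI
    have hIle : I ≤ H x := sInf_le ⟨x, Prefl x, rfl⟩
    have hIlt : I < I + 2⁻¹ ^ n :=
      ENNReal.lt_add_right (ne_top_of_le_ne_top hx hIle) (pow_ne_zero _ (ENNReal.inv_ne_zero.mpr ENNReal.ofNat_ne_top))
    obtain ⟨b, ⟨u, hu, rfl⟩, hb⟩ := sInf_lt_iff.mp hIlt
    exact ⟨u, hu, fun v hv => le_trans hb.le (by gcongr; exact sInf_le ⟨v, hv, rfl⟩)⟩
  choose! nxt hn1 hn2 using hex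
  set s : ℕ → X := fun n => Nat.rec x0 (fun k x => nxt k x) n with hs
  have hs0 : s 0 = x0 := rfl
  have hssucc : ∀ n, s (n + 1) = nxt n (s n) := fun n => rfl
  have hne : ∀ n, H (s n) ≠ ⊤ := by
    intro n
    induction n with
    | zero => exact hx0
    | succ k ih => exact ne_top_of_le_ne_top ih (Ple (hn1 k (s k) ih))
  have hstep1 : ∀ n, P (s n) (s (n + 1)) := fun n => hn1 n (s n) (hne n)
  have hstep2 : ∀ n v, P (s n) v → H (s (n + 1)) ≤ H v + 2⁻¹ ^ n :=
    fun n => hn2 n (s n) (hne n)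
  have hchain : ∀ n m, n ≤ m → P (s n) (s m) := by
    intro n m hnm
    induction m with
    | zero => cases Nat.le_zero.mp hnm; exact Prefl _
    | succ k ih =>
      rcases Nat.lt_or_ge n (k + 1) with h' | h'
      · exact Ptrans (ih (Nat.lt_succ_iff.mp h')) (hstep1 k)
      · have : n = k + 1 := le_antisymm hnm h'
        subst this; exact Prefl _
  have hanti : Antitone fun n => H (s n) :=
    antitone_nat_of_succ_le fun n => Ple (hstep1 n)
  set L := ⨅ n, H (s n) with hL
  have hLtend : Tendsto (fun n => H (s n)) atTop (𝓝 L) := tendsto_atTop_iInf hanti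
  have hLne : L ≠ ⊤ := ne_top_of_le_ne_top (hne 0) (iInf_le _ 0)
  have hcauchy : CauchySeq s := by
    rw [EMetric.cauchySeq_iff']
    intro ε hε
    set ε₁ := min ε 1 with hε₁
    have hε₁0 : ε₁ ≠ 0 := (lt_min hε zero_lt_one).ne'
    have hσε : σ * ε₁ ≠ 0 := mul_ne_zero hσ0 hε₁0
    have hev : ∀ᶠ n in atTop, H (s n) < L + σ * ε₁ :=
      hLtend.eventually_lt_const (ENNReal.lt_add_right hLne hσε)
    obtain ⟨N, hN⟩ := eventually_atTop.mp hev
    refine ⟨N, fun n hn => ?_⟩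
    have h1 : H (s n) + σ * edist (s N) (s n) ≤ H (s N) := hchain N n hn
    have h2 : H (s n) + σ * edist (s N) (s n) < H (s n) + σ * ε₁ := by
      calc H (s n) + σ * edist (s N) (s n) ≤ H (s N) := h1
        _ < L + σ * ε₁ := hN N le_rfl
        _ ≤ H (s n) + σ * ε₁ := by gcongr; exact iInf_le _ n
    have h3 : σ * edist (s N) (s n) < σ * ε₁ :=
      (ENNReal.add_lt_add_iff_left (hne n)).mp h2
    have h4 : edist (s N) (s n) < ε₁ := (ENNReal.mul_lt_mul_iff_right hσ0 hσt).mp h3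
    rw [edist_comm]
    exact lt_of_lt_of_le h4 (min_le_left _ _)
  obtain ⟨y, hy⟩ := cauchySeq_tendsto_of_complete hcauchy
  have hAy : ∀ n, P (s n) y := by
    intro n
    have hG : LowerSemicontinuous fun u => H u + σ * edist (s n) u := by
      refine hH.add (Continuous.lowerSemicontinuous ?_)
      exact (ENNReal.continuous_const_mul hσt).comp (continuous_const.edist continuous_id)
    refine le_of_forall_lt fun c hc => ?_
    have h1 := hG y c hc
    have h2 : ∀ᶠ m in atTop, c < H (s m) + σ * edist (s n) (s m) := hy.eventually h1
    have h3 : ∀ᶠ m in atTop, H (s m) + σ * edist (s n) (s m) ≤ H (s n) :=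
      eventually_atTop.mpr ⟨n, fun m hm => hchain n m hm⟩
    obtain ⟨m, hm1, hm2⟩ := (h2.and h3).exists
    exact hm1.trans_le hm2
  have hyle : ∀ n, H y ≤ H (s n) := fun n => Ple (hAy n)
  have hyL : H y ≤ L := le_iInf hyle
  refine ⟨y, by simpa [hs0] using hAy 0, ?_⟩
  intro u hu hcon
  have hPyu : P y u := by
    show H u + σ * edist y u ≤ H y
    rwa [edist_comm]
  have hHu : H u ≠ ⊤ :=
    ne_top_of_le_ne_top (hne 0) ((Ple hPyu).trans ((hyle 0)))
  have hn : ∀ n, σ * edist u y ≤ 2⁻¹ ^ n := by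
    intro n
    have h1 : P (s n) u := Ptrans (hAy n) hPyu
    have h2 : H (s (n + 1)) ≤ H u + 2⁻¹ ^ n := hstep2 n u h1
    have h4 : H u + σ * edist u y ≤ H u + 2⁻¹ ^ n :=
      hcon.trans (hyL.trans ((iInf_le _ (n + 1)).trans h2))
    exact (ENNReal.add_le_add_iff_left hHu).mp h4
  have hz : σ * edist u y = 0 := by
    by_contra h0
    obtain ⟨n, hn'⟩ := ENNReal.exists_inv_two_pow_lt h0
    exact absurd (hn n) (not_le.mpr hn')
  rcases mul_eq_zero.mp hz with h' | h'
  · exact hσ0 h'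
  · exact hu (edist_eq_zero.mp h')

theorem local_phi_error_bound_of_nslope {X : Type*} [MetricSpace X] [CompleteSpace X]
    (f : X → EReal) (hbot : ∀ u, f u ≠ ⊥) (hlsc : LowerSemicontinuous f)
    (xb : X) (hxb : f xb ≤ 0)
    (φ φ' : ℝ → ℝ) (hφ0 : ∀ t ≤ (0 : ℝ), φ t = 0) (hφpos : ∀ t > (0 : ℝ), 0 < φ t)
    (hder : ∀ t > (0 : ℝ), HasDerivAt φ (φ' t) t)
    (hcont : ContinuousOn φ' (Set.Ioi (0 : ℝ))) (hd : ∀ t > (0 : ℝ), 0 < φ' t)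
    (htop : Filter.Tendsto φ Filter.atTop Filter.atTop)
    (h : ∃ δ > (0 : ℝ), ∃ μ > (0 : ℝ), ∀ x ∈ EMetric.ball xb (ENNReal.ofReal δ),
      0 < f x → f x < (μ : EReal) →
      1 ≤ nslope (fun u => if f u = ⊤ then (⊤ : EReal)
            else ((φ (max (f u).toReal 0)) : EReal)) x) :
    ∃ δ' > (0 : ℝ), ∃ μ' > (0 : ℝ), ∀ x ∈ EMetric.ball xb (ENNReal.ofReal δ'),
      0 < f x → f x < (μ' : EReal) →
      EMetric.infEdist x {v | f v ≤ 0} ≤ ENNReal.ofReal (φ (f x).toReal) := by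
  classical
  obtain ⟨δ, hδ, μ, hμ, hslope⟩ := h
  have hφnn : ∀ t : ℝ, 0 ≤ φ t := by
    intro t
    rcases le_or_gt t 0 with h' | h'
    · simp [hφ0 t h']
    · exact (hφpos t h').le
  have hmono : StrictMonoOn φ (Set.Ioi (0 : ℝ)) := by
    apply strictMonoOn_of_deriv_pos (convex_Ioi 0)
    · exact fun t ht => (hder t ht).continuousAt.continuousWithinAt
    · intro t ht
      rw [interior_Ioi] at ht
      rw [(hder t ht).deriv]
      exact hd t ht
  set g : X → EReal := fun u => if f u = ⊤ then (⊤ : EReal)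
            else ((φ (max (f u).toReal 0)) : EReal) with hgdef
  set H : X → ℝ≥0∞ := fun u => if f u = ⊤ then ⊤
            else ENNReal.ofReal (φ (max (f u).toReal 0)) with hHdef
  -- toReal positivity helper
  have htrpos : ∀ {a : EReal}, 0 < a → a ≠ ⊤ → 0 < a.toReal := by
    intro a ha hat
    have hab : a ≠ ⊥ := fun hh => by simp [hh] at ha
    have := EReal.coe_toReal hat hab
    rw [← this] at ha
    exact_mod_cast ha
  -- lower semicontinuity of H
  have hHlsc : LowerSemicontinuous H := by
    intro x c hc
    rcases le_or_gt (f x) 0 with hx0 | hx0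
    · exfalso
      have hxt : f x ≠ ⊤ := fun hh => by simp [hh] at hx0
      have htr : (f x).toReal ≤ 0 := by
        rcases eq_or_ne (f x) ⊥ with hb | hb
        · simp [hb]
        · have := EReal.coe_toReal hxt hb
          rw [← this] at hx0
          exact_mod_cast hx0
      have hz : H x = 0 := by
        simp [hHdef, hxt, max_eq_right htr, hφ0 0 le_rfl]
      rw [hz] at hc
      exact (not_lt_of_ge (zero_le : (0 : ℝ≥0∞) ≤ c)) hc
    · rcases eq_or_ne (f x) ⊤ with hxt | hxt
      · have hct : c ≠ ⊤ := by
          have : H x = ⊤ := by simp [hHdef, hxt]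
          rw [this] at hc; exact hc.ne
        obtain ⟨M, hM1, hM2⟩ :=
          ((htop.eventually (eventually_ge_atTop (c.toReal + 1))).and
            (eventually_ge_atTop 1)).exists
        have hMpos : (0 : ℝ) < M := lt_of_lt_of_le one_pos hM2
        have hev := hlsc x (M : EReal) (by show f x > (M : EReal); rw [hxt]; exact (EReal.coe_lt_top M))
        filter_upwards [hev] with u hu
        rcases eq_or_ne (f u) ⊤ with h' | h'
        · have : H u = ⊤ := by simp [hHdef, h']
          rw [this]; exact hct.lt_top
        · have hub : f u ≠ ⊥ := hbot u
          have hu' : M < (f u).toReal := by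
            have := EReal.coe_toReal h' hub
            rw [← this] at hu
            exact_mod_cast hu
          have hupos : (0 : ℝ) < (f u).toReal := hMpos.trans hu'
          have hφle : c.toReal + 1 ≤ φ (max (f u).toReal 0) := by
            rw [max_eq_left hupos.le]
            exact le_trans hM1 ((hmono.monotoneOn) hMpos hupos hu'.le)
          have hHu : H u = ENNReal.ofReal (φ (max (f u).toReal 0)) := by
            simp [hHdef, h']
          rw [hHu]
          refine lt_of_lt_of_le ?_ (ENNReal.ofReal_le_ofReal hφle)
          exact (ENNReal.lt_ofReal_iff_toReal_lt hct).mpr (lt_add_one _)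
      · -- 0 < f x < ⊤
        set t := (f x).toReal with htdef
        have ht0 : 0 < t := htrpos hx0 hxt
        have hHx : H x = ENNReal.ofReal (φ t) := by
          simp [hHdef, hxt, ← htdef, max_eq_left ht0.le]
        rw [hHx] at hc
        have hct : c ≠ ⊤ := (hc.trans ENNReal.ofReal_lt_top).ne
        have hcφ : c.toReal < φ t := (ENNReal.lt_ofReal_iff_toReal_lt hct).mp hc
        have hcontφ : ContinuousAt φ t := (hder t ht0).continuousAt
        have hev1 : ∀ᶠ r in 𝓝 t, c.toReal < φ r := hcontφ.eventually (eventually_gt_nhds hcφ)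
        obtain ⟨ε, hε, hball⟩ := Metric.eventually_nhds_iff.mp hev1
        set sp := max (t - ε / 2) (t / 2) with hsp
        have hsp0 : 0 < sp := lt_of_lt_of_le (by linarith) (le_max_right _ _)
        have hspt : sp < t := max_lt (by linarith) (by linarith)
        have hspd : dist sp t < ε := by
          rw [Real.dist_eq, abs_sub_lt_iff]
          constructor
          · linarith
          · have : t - ε / 2 ≤ sp := le_max_left _ _
            linarith
        have hφsp : c.toReal < φ sp := hball hspd
        have hev := hlsc x (sp : EReal) (by
          show f x > (sp : EReal)
          rw [← EReal.coe_toReal hxt (hbot x)]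
          exact_mod_cast hspt)
        filter_upwards [hev] with u hu
        rcases eq_or_ne (f u) ⊤ with h' | h'
        · have : H u = ⊤ := by simp [hHdef, h']
          rw [this]; exact hct.lt_top
        · have hu' : sp < (f u).toReal := by
            have := EReal.coe_toReal h' (hbot u)
            rw [← this] at hu
            exact_mod_cast hu
          have hupos : (0 : ℝ) < (f u).toReal := hsp0.trans hu'
          have hHu : H u = ENNReal.ofReal (φ (max (f u).toReal 0)) := by
            simp [hHdef, h']
          rw [hHu, max_eq_left hupos.le]
          have : c.toReal < φ (f u).toReal :=
            lt_of_lt_of_le hφsp ((hmono.monotoneOn) hsp0 hupos hu'.le)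
          exact (ENNReal.lt_ofReal_iff_toReal_lt hct).mpr this
  refine ⟨δ / 2, by positivity, μ, hμ, ?_⟩
  intro x hxball hfx hfxμ
  by_contra hcon
  push_neg at hcon
  have hxbS : xb ∈ {v : X | f v ≤ 0} := hxb
  have hxt : f x ≠ ⊤ := (hfxμ.trans (EReal.coe_lt_top μ)).ne
  set t := (f x).toReal with htdef
  have ht0 : 0 < t := htrpos hfx hxt
  have htμ : t < μ := by
    have := EReal.coe_toReal hxt (hbot x)
    rw [← this] at hfxμ
    exact_mod_cast hfxμ
  have hHx : H x = ENNReal.ofReal (φ t) := by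
    simp [hHdef, hxt, ← htdef, max_eq_left ht0.le]
  set R := ENNReal.ofReal (φ t) with hRdef
  have hRpos : 0 < R := ENNReal.ofReal_pos.mpr (hφpos t ht0)
  set D := EMetric.infEdist x {v : X | f v ≤ 0} with hDdef
  have hRD : R < D := hcon
  have hDball : D < ENNReal.ofReal (δ / 2) :=
    lt_of_le_of_lt (EMetric.infEdist_le_edist_of_mem hxbS) hxball
  obtain ⟨lam, hRlam, hlamD⟩ := exists_between hRD
  have hlam0 : lam ≠ 0 := (hRpos.trans hRlam).ne'
  have hlamt : lam ≠ ⊤ := ((hlamD.trans hDball).trans ENNReal.ofReal_lt_top).ne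
  set σ := R / lam with hσdef
  have hσ0 : σ ≠ 0 := by
    rw [hσdef]
    simp [ENNReal.div_eq_zero_iff, hRpos.ne', hlamt]
  have hσt : σ ≠ ⊤ := (ENNReal.div_lt_top ENNReal.ofReal_ne_top hlam0).ne
  have hσ1 : σ < 1 := by
    rw [hσdef, ENNReal.div_lt_iff (Or.inl hlam0) (Or.inl hlamt), one_mul]
    exact hRlam
  obtain ⟨y, hy1, hy2⟩ := my_ekeland H hHlsc hσ0 hσt x (by rw [hHx]; exact ENNReal.ofReal_ne_top)
  rw [hHx] at hy1
  have hHy : H y ≤ R := le_trans le_self_add hy1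
  have hσlam : σ * lam = R := by
    rw [hσdef, mul_comm]
    exact ENNReal.mul_div_cancel hlam0 hlamt
  have hdxy : edist x y ≤ lam := by
    have h1 : σ * edist x y ≤ σ * lam := by
      rw [hσlam]
      exact le_trans le_add_self hy1
    exact (ENNReal.mul_le_mul_iff_right hσ0 hσt).mp h1
  have hyS : y ∉ {v : X | f v ≤ 0} := by
    intro hyS
    exact absurd (EMetric.infEdist_le_edist_of_mem hyS)
      (not_le.mpr (lt_of_le_of_lt hdxy hlamD))
  have hfy : 0 < f y := not_le.mp hyS
  have hfyt : f y ≠ ⊤ := by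
    intro hh
    have : H y = ⊤ := by simp [hHdef, hh]
    rw [this, top_le_iff] at hHy
    exact ENNReal.ofReal_ne_top hHy
  set sY := (f y).toReal with hsYdef
  have hsY0 : 0 < sY := htrpos hfy hfyt
  have hHyval : H y = ENNReal.ofReal (φ sY) := by
    simp [hHdef, hfyt, ← hsYdef, max_eq_left hsY0.le]
  have hφsY : φ sY ≤ φ t := by
    rw [hHyval, hRdef] at hHy
    exact (ENNReal.ofReal_le_ofReal_iff (hφnn t)).mp hHy
  have hsYt : sY ≤ t := by
    by_contra hlt
    push_neg at hlt
    exact absurd hφsY (not_le.mpr (hmono ht0 hsY0 hlt))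
  have hfyμ : f y < (μ : EReal) := by
    rw [← EReal.coe_toReal hfyt (hbot y)]
    exact_mod_cast lt_of_le_of_lt hsYt htμ
  have hyball : y ∈ EMetric.ball xb (ENNReal.ofReal δ) := by
    have h1 : edist y xb ≤ edist y x + edist x xb := edist_triangle _ _ _
    have h2 : edist y x + edist x xb < ENNReal.ofReal (δ / 2) + ENNReal.ofReal (δ / 2) := by
      apply ENNReal.add_lt_add
      · rw [edist_comm]
        exact lt_of_le_of_lt hdxy (hlamD.trans hDball)
      · exact hxball
    have h3 : ENNReal.ofReal (δ / 2) + ENNReal.ofReal (δ / 2) = ENNReal.ofReal δ := by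
      rw [← ENNReal.ofReal_add (by positivity) (by positivity)]
      norm_num
    exact lt_of_le_of_lt h1 (by rw [← h3]; exact h2)
  have hns := hslope y hyball hfy hfyμ
  have hkey : ∀ u : X, epos (g y - max (g u) 0) = H y - H u := by
    intro u
    have hgy : g y = ((φ sY : ℝ) : EReal) := by simp [hgdef, hfyt, ← hsYdef, max_eq_left hsY0.le]
    rcases eq_or_ne (f u) ⊤ with h' | h'
    · have hgu : g u = ⊤ := by simp [hgdef, h']
      have hHu : H u = ⊤ := by simp [hHdef, h']
      rw [hgu, hHu]
      have : max (⊤ : EReal) 0 = ⊤ := max_eq_left le_top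
      rw [this, hgy]
      have hsub : ((φ sY : ℝ) : EReal) - ⊤ = ⊥ := EReal.sub_top _
      rw [hsub, tsub_eq_zero_of_le (le_top : H y ≤ ⊤)]
      simp [epos]
    · have hgu : g u = ((φ (max (f u).toReal 0) : ℝ) : EReal) := by simp [hgdef, h']
      have hHu : H u = ENNReal.ofReal (φ (max (f u).toReal 0)) := by simp [hHdef, h']
      set b := φ (max (f u).toReal 0) with hb
      have hbnn : 0 ≤ b := hφnn _
      have hmaxb : max ((b : ℝ) : EReal) 0 = ((b : ℝ) : EReal) :=
        max_eq_left (by exact_mod_cast hbnn)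
      rw [hgu, hHu, hgy, hmaxb, ← EReal.coe_sub, hHyval, ← ENNReal.ofReal_sub _ hbnn]
      simp only [epos, EReal.coe_ne_top, if_false, EReal.toReal_coe]
  have hbound : nslope g y ≤ σ := by
    rw [nslope]
    refine iSup₂_le fun u hu => ?_
    rw [hkey u]
    have hnotP := hy2 u hu
    have h1 : H y ≤ H u + σ * edist u y := (not_le.mp hnotP).le
    have h2 : H y - H u ≤ σ * edist u y := by
      rw [tsub_le_iff_right, add_comm]
      exact h1
    rw [ENNReal.div_le_iff (edist_pos.mpr hu).ne' (edist_ne_top u y)]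
    exact h2
  exact absurd hns (not_le.mpr (lt_of_le_of_lt hbound hσ1))
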